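/- Let a > 0, let b be real with |b| ≤ a, let u > 0, and let φ be real with 0 < φ ≤ 1/a. Then ( arcsin(a·φ) − arcsin(b·φ) ) / ( 2·arctan(u·φ) ) ≤ arccos(b/a) / ( 2·arctan(u/a) ). (This monotonicity in φ of the switching-number count n_I(φ) is the key step in Proposition 14's refined upper bound n_I ≤ arccos(r⁻_x/r⁺_x)/(2·arctan(u_max/|r⁺_x|)) + 1 on the number of switchings of a globally time-optimal bang-bang solution.) -/

import Mathlib

open Real

private lemma arcsin_aux (s c : ℝ) (hs0 : 0 ≤ s) (hs1 : s ≤ 1)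
    (hc : -1 ≤ c) (hc1 : c ≤ 1) :
    arcsin s - arcsin (c * s) ≤ s * (π / 2 - arcsin c) := by
  set H : ℝ → ℝ := fun t => s * arcsin t - arcsin (s * t) with hH
  have hmono : MonotoneOn H (Set.Icc (-1 : ℝ) 1) := by
    have hint : interior (Set.Icc (-1 : ℝ) 1) = Set.Ioo (-1 : ℝ) 1 := interior_Icc
    have hderiv : ∀ t ∈ Set.Ioo (-1 : ℝ) 1,
        HasDerivAt H (s * (1 / Real.sqrt (1 - t ^ 2)) - s * (1 / Real.sqrt (1 - (s*t) ^ 2))) t := by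
      intro t ht
      have ht1 : t ≠ -1 := ne_of_gt ht.1
      have ht2 : t ≠ 1 := ne_of_lt ht.2
      have hst : |s * t| < 1 := by
        rw [abs_mul]
        calc |s| * |t| ≤ 1 * |t| := by
              apply mul_le_mul_of_nonneg_right _ (abs_nonneg t)
              rwa [abs_of_nonneg hs0]
          _ = |t| := one_mul _
          _ < 1 := abs_lt.2 ⟨ht.1, ht.2⟩
      have h1 : HasDerivAt arcsin (1 / Real.sqrt (1 - t ^ 2)) t :=
        Real.hasDerivAt_arcsin ht1 ht2
      have h2 : HasDerivAt arcsin (1 / Real.sqrt (1 - (s*t) ^ 2)) (s * t) :=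
        Real.hasDerivAt_arcsin (by intro h; rw [h] at hst; norm_num at hst)
          (by intro h; rw [h] at hst; norm_num at hst)
      have h3 : HasDerivAt (fun t => arcsin (s * t))
          (1 / Real.sqrt (1 - (s*t) ^ 2) * s) t := by
        exact (h2.comp t ((hasDerivAt_id t).const_mul s)).congr_deriv (by ring)
      have := (h1.const_mul s).sub h3
      exact this.congr_deriv (by ring)
    apply monotoneOn_of_deriv_nonneg (convex_Icc _ _)
    · apply ContinuousOn.sub
      · exact (Real.continuous_arcsin.comp continuous_id).continuousOn.const_smul s |>.congr
          (by intro x hx; simp [smul_eq_mul])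
      · exact (Real.continuous_arcsin.comp (continuous_const.mul continuous_id)).continuousOn
    · rw [hint]
      intro t ht
      exact (hderiv t ht).differentiableAt.differentiableWithinAt
    · rw [hint]
      intro t ht
      rw [(hderiv t ht).deriv]
      have h1 : (0:ℝ) < 1 - t ^ 2 := by nlinarith [ht.1, ht.2]
      have hsq : s ^ 2 ≤ 1 := by nlinarith
      have h2 : 1 - t ^ 2 ≤ 1 - (s*t) ^ 2 := by nlinarith [sq_nonneg t, sq_nonneg (s*t)]
      have hsq1 : 0 < Real.sqrt (1 - t ^ 2) := Real.sqrt_pos.2 h1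
      have hsq2 : Real.sqrt (1 - t ^ 2) ≤ Real.sqrt (1 - (s*t) ^ 2) :=
        Real.sqrt_le_sqrt h2
      have : 1 / Real.sqrt (1 - (s*t) ^ 2) ≤ 1 / Real.sqrt (1 - t ^ 2) :=
        one_div_le_one_div_of_le hsq1 hsq2
      nlinarith
  have h1 : H c ≤ H 1 := hmono ⟨hc, hc1⟩ ⟨by norm_num, le_refl 1⟩ hc1
  have e1 : H 1 = s * (π / 2) - arcsin s := by simp [hH, Real.arcsin_one]
  have e2 : H c = s * arcsin c - arcsin (s * c) := rfl
  rw [e1, e2] at h1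
  have : arcsin (s * c) = arcsin (c * s) := by rw [mul_comm]
  linarith [this ▸ h1]

private lemma arctan_aux (s v : ℝ) (hs0 : 0 ≤ s) (hs1 : s ≤ 1) (hv : 0 ≤ v) :
    s * arctan v ≤ arctan (s * v) := by
  set K : ℝ → ℝ := fun t => arctan (s * t) - s * arctan t with hK
  have hderiv : ∀ t : ℝ,
      HasDerivAt K (1 / (1 + (s*t) ^ 2) * s - s * (1 / (1 + t ^ 2))) t := by
    intro t
    have h1 : HasDerivAt arctan (1 / (1 + t ^ 2)) t := Real.hasDerivAt_arctan t
    have h2 : HasDerivAt (fun t => arctan (s * t)) (1 / (1 + (s*t) ^ 2) * s) t := by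
      exact ((Real.hasDerivAt_arctan (s*t)).comp t ((hasDerivAt_id t).const_mul s)).congr_deriv (by ring)
    exact h2.sub (h1.const_mul s)
  have hmono : MonotoneOn K (Set.Icc (0:ℝ) v) := by
    apply monotoneOn_of_deriv_nonneg (convex_Icc _ _)
    · exact Continuous.continuousOn (by continuity)
    · intro t ht
      exact (hderiv t).differentiableAt.differentiableWithinAt
    · intro t ht
      rw [(hderiv t).deriv]
      have h1 : (0:ℝ) < 1 + t ^ 2 := by positivity
      have hsq : s ^ 2 ≤ 1 := by nlinarith
      have h2 : 1 + (s*t) ^ 2 ≤ 1 + t ^ 2 := by nlinarith [sq_nonneg t]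
      have h3 : (0:ℝ) < 1 + (s*t) ^ 2 := by positivity
      have : 1 / (1 + t ^ 2) ≤ 1 / (1 + (s*t) ^ 2) := one_div_le_one_div_of_le h3 h2
      nlinarith
  have h1 : K 0 ≤ K v := hmono ⟨le_refl 0, hv⟩ ⟨hv, le_refl v⟩ hv
  have e0 : K 0 = 0 := by simp [hK]
  rw [e0] at h1
  have : K v = arctan (s * v) - s * arctan v := rfl
  linarith [this ▸ h1]

/-- Monotonicity in `φ` of the switching-number count `n_I(φ)` (Appendix H), key step in
Proposition 14's refined upper bound on the number of switchings. -/
theorem corner_count_monotone (a b u φ : ℝ) (ha : 0 < a) (hb : |b| ≤ a) (hu : 0 < u)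
    (hφ₀ : 0 < φ) (hφ₁ : φ ≤ 1 / a) :
    (arcsin (a * φ) - arcsin (b * φ)) / (2 * arctan (u * φ)) ≤
      arccos (b / a) / (2 * arctan (u / a)) := by
  set s := a * φ with hs
  set c := b / a with hc
  set v := u / a with hv
  have ha' : a ≠ 0 := ne_of_gt ha
  have hs0 : 0 < s := mul_pos ha hφ₀
  have hs1 : s ≤ 1 := by
    rw [hs]
    calc a * φ ≤ a * (1 / a) := by apply mul_le_mul_of_nonneg_left hφ₁ ha.le
      _ = 1 := by field_simp
  have hc1 : -1 ≤ c := by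
    rw [hc, le_div_iff₀ ha]
    have := abs_le.1 hb
    linarith [this.1]
  have hc2 : c ≤ 1 := by
    rw [hc, div_le_one ha]
    have := abs_le.1 hb
    linarith [this.2]
  have hv0 : 0 < v := div_pos hu ha
  have hbs : b * φ = c * s := by rw [hc, hs]; field_simp
  have hus : u * φ = s * v := by rw [hv, hs]; field_simp
  have key1 : arcsin (a * φ) - arcsin (b * φ) ≤ s * (π / 2 - arcsin c) := by
    rw [hbs, ← hs]
    exact arcsin_aux s c hs0.le hs1 hc1 hc2
  have key2 : s * arctan v ≤ arctan (u * φ) := by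
    rw [hus]
    exact arctan_aux s v hs0.le hs1 hv0.le
  have hatv : 0 < arctan v := by
    rw [← Real.arctan_zero]; exact Real.arctan_strictMono hv0
  have hden : (0:ℝ) < 2 * (s * arctan v) := by positivity
  have hnum : 0 ≤ s * (π / 2 - arcsin c) := by
    have := Real.arcsin_le_pi_div_two c
    have h := hs0.le
    nlinarith
  have step : (arcsin (a * φ) - arcsin (b * φ)) / (2 * arctan (u * φ)) ≤
      s * (π / 2 - arcsin c) / (2 * (s * arctan v)) := by
    apply div_le_div₀ hnum key1 hden
    linarith
  have eq1 : s * (π / 2 - arcsin c) / (2 * (s * arctan v)) = (π / 2 - arcsin c) / (2 * arctan v) := by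
    rw [mul_comm (2:ℝ) (s * arctan v)]
    field_simp
  have eq2 : arccos c = π / 2 - arcsin c := Real.arccos_eq_pi_div_two_sub_arcsin c
  rw [eq1, ← eq2] at step
  exact step
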